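/- Let p(z) = Σ_{n=0}^{k} a_n z^n be a polynomial in one complex variable with leading coefficient a_k ≠ 0, and let f be holomorphic on an open ball B_r(0) ⊂ ℂ with r > 1. Then |f(0)| ≤ |a_k|^{-1} · sup_{|z|=1} |f(z) p(z)|. -/

import Mathlib

open Polynomial

lemma aux_eval_reverse_norm (p : Polynomial ℂ) (z : ℂ) (hz : ‖z‖ = 1) :
    ‖((p.map (starRingEnd ℂ)).reverse).eval z‖ = ‖p.eval z‖ := by
  have hz0 : z ≠ 0 := by intro h; simp [h] at hz
  have : Invertible z⁻¹ := invertibleOfNonzero (inv_ne_zero hz0)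
  have hinv : ⅟ (z⁻¹) = z := by rw [invOf_eq_inv, inv_inv]
  have h := Polynomial.eval₂_reverse_mul_pow (RingHom.id ℂ) (z⁻¹) (p.map (starRingEnd ℂ))
  rw [hinv] at h
  have hev : ((p.map (starRingEnd ℂ)).reverse).eval z
      * (z⁻¹) ^ (p.map (starRingEnd ℂ)).natDegree = (p.map (starRingEnd ℂ)).eval z⁻¹ := h
  have hconjz : (starRingEnd ℂ) z * z = 1 := by
    rw [mul_comm, Complex.mul_conj]
    norm_cast
    rw [Complex.normSq_eq_norm_sq, hz]; norm_num
  have hconj : (starRingEnd ℂ) z⁻¹ = z := by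
    rw [map_inv₀]
    exact inv_eq_of_mul_eq_one_right hconjz
  have hmap : (p.map (starRingEnd ℂ)).eval z⁻¹ = (starRingEnd ℂ) (p.eval z) := by
    rw [Polynomial.eval_map]
    have h2 := Polynomial.hom_eval₂ p (RingHom.id ℂ) (starRingEnd ℂ) ((starRingEnd ℂ) z⁻¹)
    simp only [RingHom.comp_id, Complex.conj_conj] at h2
    rw [← h2, hconj]
    rfl
  have key : ‖((p.map (starRingEnd ℂ)).reverse).eval z‖ * ‖(z⁻¹) ^ (p.map (starRingEnd ℂ)).natDegree‖
      = ‖(p.map (starRingEnd ℂ)).eval z⁻¹‖ := by rw [← norm_mul, hev]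
  rw [norm_pow, norm_inv, hz] at key
  simp only [inv_one, one_pow, mul_one] at key
  rw [key, hmap]
  simp

/-- Maximum-principle estimate: for a polynomial `p` with nonzero leading coefficient `a_k`
and `f` holomorphic on a ball of radius `r > 1`,
`|f 0| ≤ |a_k|⁻¹ * sup_{|z|=1} |f z * p z|`. -/
theorem stmt0 (r : ℝ) (hr : 1 < r) (f : ℂ → ℂ)
    (hf : DifferentiableOn ℂ f (Metric.ball (0 : ℂ) r))
    (p : Polynomial ℂ) (hp : p.leadingCoeff ≠ 0) :
    ‖f 0‖ ≤ ‖p.leadingCoeff‖⁻¹ *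
      sSup {x : ℝ | ∃ z : ℂ, ‖z‖ = 1 ∧ x = ‖f z * p.eval z‖} := by
  set q : Polynomial ℂ := (p.map (starRingEnd ℂ)).reverse with hq
  set g : ℂ → ℂ := fun z => f z * q.eval z with hg
  set S : Set ℝ := {x : ℝ | ∃ z : ℂ, ‖z‖ = 1 ∧ x = ‖f z * p.eval z‖} with hS
  have hsub : Metric.closedBall (0 : ℂ) 1 ⊆ Metric.ball 0 r :=
    Metric.closedBall_subset_ball hr
  have hSim : S = (fun z => ‖f z * p.eval z‖) '' Metric.sphere (0 : ℂ) 1 := by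
    ext x
    simp [hS, Set.mem_image, mem_sphere_zero_iff_norm, eq_comm, and_comm]
  have hbdd : BddAbove S := by
    rw [hSim]
    exact (isCompact_sphere _ _).bddAbove_image <|
      ((hf.continuousOn.mono (Metric.sphere_subset_closedBall.trans hsub)).mul
        (Polynomial.continuous p).continuousOn).norm
  have hC : ∀ z ∈ Metric.sphere (0 : ℂ) 1, ‖g z‖ ≤ sSup S := by
    intro z hz
    have hz1 : ‖z‖ = 1 := mem_sphere_zero_iff_norm.mp hz
    have : ‖g z‖ = ‖f z * p.eval z‖ := by
      rw [hg]; simp only [norm_mul]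
      rw [aux_eval_reverse_norm p z hz1]
    rw [this]
    exact le_csSup hbdd ⟨z, hz1, rfl⟩
  have hdiff : DiffContOnCl ℂ g (Metric.ball (0 : ℂ) 1) :=
    ⟨(hf.mono (Metric.ball_subset_ball hr.le)).mul
      (q.differentiable).differentiableOn,
     by
      rw [closure_ball (0 : ℂ) one_ne_zero]
      exact ((hf.continuousOn.mono hsub).mul (Polynomial.continuous q).continuousOn)⟩
  have hmax : ‖g 0‖ ≤ sSup S := by
    refine Complex.norm_le_of_forall_mem_frontier_norm_le Metric.isBounded_ball hdiff ?_ ?_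
    · intro z hz
      rw [frontier_ball (0 : ℂ) one_ne_zero] at hz
      exact hC z hz
    · rw [closure_ball (0 : ℂ) one_ne_zero]
      exact Metric.mem_closedBall_self zero_le_one
  have hq0 : ‖q.eval 0‖ = ‖p.leadingCoeff‖ := by
    rw [← Polynomial.coeff_zero_eq_eval_zero, hq, Polynomial.coeff_zero_reverse,
      Polynomial.leadingCoeff_map_of_injective (starRingEnd ℂ).injective]
    simp
  have hg0 : ‖g 0‖ = ‖f 0‖ * ‖p.leadingCoeff‖ := by
    rw [hg]; simp only [norm_mul, hq0]
  rw [hg0] at hmax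
  have hpos : (0 : ℝ) < ‖p.leadingCoeff‖ := norm_pos_iff.mpr hp
  rw [inv_mul_eq_div, le_div_iff₀ hpos]
  exact hmax
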